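/- Define the six clock-constraint Hamiltonians H_clock^{(1)},...,H_clock^{(6)} on (ℂ⁴)^{⊗L} (L ≥ 1) with single-particle basis {u, d, a1, a2} as in the quantum 4-SAT construction. Then a standard basis state |s₁,...,s_L⟩ (s_j ∈ {u,d,a1,a2}) is annihilated by all six Hamiltonians if and only if it is of the form |d,...,d, a, u,...,u⟩ with exactly one particle in state a ∈ {a1, a2} at some position j, dead particles before it and unborn particles after it. Consequently the zero subspace of H_clock restricted to basis states has dimension exactly 2L. -/
import Mathlib


/-- Single-particle clock states: unborn, dead, active phase 1, active phase 2. -/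
def unb : Fin 4 := 0
def ded : Fin 4 := 1
def act1 : Fin 4 := 2
def act2 : Fin 4 := 3

/-- A clock particle is active. -/
def IsActive (s : Fin 4) : Prop := s = act1 ∨ s = act2

/-- A standard basis state of the clock register is annihilated by all six
clock-constraint Hamiltonians iff it satisfies these six combinatorial
conditions (the Hamiltonians are diagonal sums of projectors onto the
violating configurations). -/
def LegalClock (L : ℕ) (hL : 0 < L) (s : Fin L → Fin 4) : Prop :=
  (s ⟨0, hL⟩ ≠ unb) ∧
  (s ⟨L - 1, by omega⟩ ≠ ded) ∧
  (∀ j k : Fin L, j < k → ¬ (IsActive (s j) ∧ IsActive (s k))) ∧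
  (∀ j k : Fin L, j < k → ¬ ((IsActive (s j) ∨ s j = unb) ∧ s k = ded)) ∧
  (∀ j k : Fin L, j < k → ¬ (s j = unb ∧ (IsActive (s k) ∨ s k = ded))) ∧
  (∀ j : Fin L, ∀ h : (j : ℕ) + 1 < L, ¬ (s j = ded ∧ s ⟨(j : ℕ) + 1, h⟩ = unb))

/-- A string of the form d,...,d,a,u,...,u with a single active particle. -/
def IsDominoString (L : ℕ) (s : Fin L → Fin 4) : Prop :=
  ∃ j : Fin L, IsActive (s j) ∧ (∀ k : Fin L, k < j → s k = ded) ∧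
    (∀ k : Fin L, j < k → s k = unb)

lemma fin4_cases (x : Fin 4) : x = unb ∨ x = ded ∨ x = act1 ∨ x = act2 := by
  revert x; decide

lemma not_active_unb : ¬ IsActive unb := by unfold IsActive; decide
lemma not_active_ded : ¬ IsActive ded := by unfold IsActive; decide
lemma active_act1 : IsActive act1 := by unfold IsActive; decide
lemma active_act2 : IsActive act2 := by unfold IsActive; decide
lemma ded_ne_unb : ded ≠ unb := by decide
lemma unb_ne_ded : unb ≠ ded := by decide
lemma act1_ne_act2 : act1 ≠ act2 := by decide

lemma dominoFun_self (L : ℕ) (j : Fin L) (a : Fin 4) : True := trivial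

def dominoFun (L : ℕ) (j : Fin L) (a : Fin 4) : Fin L → Fin 4 :=
  fun k => if k < j then ded else if k = j then a else unb

lemma dominoFun_domino (L : ℕ) (j : Fin L) (a : Fin 4) (ha : IsActive a) :
    IsDominoString L (dominoFun L j a) := by
  refine ⟨j, ?_, ?_, ?_⟩
  · simp [dominoFun, ha]
  · intro k hk; simp [dominoFun, hk]
  · intro k hk
    have h1 : ¬ k < j := not_lt.mpr hk.le
    have h2 : k ≠ j := hk.ne'
    simp [dominoFun, h1, h2]

lemma legal_iff (L : ℕ) (hL : 0 < L) (s : Fin L → Fin 4) :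
    LegalClock L hL s ↔ IsDominoString L s := by
  constructor
  · rintro ⟨h1, h2, h3, h4, h5, h6⟩
    -- there exists an active site
    have hex : ∃ j : Fin L, IsActive (s j) := by
      by_contra hno
      push_neg at hno
      -- every site is unb or ded
      have hud : ∀ k : Fin L, s k = unb ∨ s k = ded := by
        intro k
        rcases fin4_cases (s k) with h | h | h | h
        · exact Or.inl h
        · exact Or.inr h
        · exact absurd (Or.inl h) (hno k)
        · exact absurd (Or.inr h) (hno k)
      -- least unb index
      have hPL : ∃ n, ∃ h : n < L, s ⟨n, h⟩ = unb := by
        refine ⟨L - 1, by omega, ?_⟩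
        rcases hud ⟨L - 1, by omega⟩ with h | h
        · exact h
        · exact absurd h h2
      classical
      let i0 := Nat.find hPL
      obtain ⟨hi0L, hi0u⟩ : ∃ h : i0 < L, s ⟨i0, h⟩ = unb := Nat.find_spec hPL
      have hi0pos : 0 < i0 := by
        rcases Nat.eq_zero_or_pos i0 with h0 | h0
        · exfalso; apply h1
          have : s ⟨i0, hi0L⟩ = unb := hi0u
          simpa [h0] using this
        · exact h0
      have hprev : i0 - 1 < L := by omega
      have hprevne : s ⟨i0 - 1, hprev⟩ ≠ unb := by
        intro hcon
        have := Nat.find_min hPL (m := i0 - 1) (by omega)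
        exact this ⟨hprev, hcon⟩
      have hprevd : s ⟨i0 - 1, hprev⟩ = ded := by
        rcases hud ⟨i0 - 1, hprev⟩ with h | h
        · exact absurd h hprevne
        · exact h
      have hlt : (i0 - 1) + 1 < L := by omega
      apply h6 ⟨i0 - 1, hprev⟩ hlt
      constructor
      · exact hprevd
      · have : (⟨(i0 - 1) + 1, hlt⟩ : Fin L) = ⟨i0, hi0L⟩ := by
          apply Fin.ext; simp; omega
        rw [this]; exact hi0u
    obtain ⟨j, hj⟩ := hex
    refine ⟨j, hj, ?_, ?_⟩
    · intro k hk
      rcases fin4_cases (s k) with h | h | h | h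
      · exact absurd ⟨h, Or.inl hj⟩ (h5 k j hk)
      · exact h
      · exact absurd ⟨Or.inl h, hj⟩ (h3 k j hk)
      · exact absurd ⟨Or.inr h, hj⟩ (h3 k j hk)
    · intro k hk
      rcases fin4_cases (s k) with h | h | h | h
      · exact h
      · exact absurd ⟨Or.inl hj, h⟩ (h4 j k hk)
      · exact absurd ⟨hj, Or.inl h⟩ (h3 j k hk)
      · exact absurd ⟨hj, Or.inr h⟩ (h3 j k hk)
  · rintro ⟨j, hact, hbef, haft⟩
    -- classification helpers
    have hA : ∀ m : Fin L, s m = ded → m < j := by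
      intro m hm
      rcases lt_trichotomy m j with h | h | h
      · exact h
      · exfalso; rw [h] at hm; rw [hm] at hact; exact not_active_ded hact
      · exact absurd (haft m h) (hm ▸ ded_ne_unb)
    have hB : ∀ m : Fin L, s m = unb → j < m := by
      intro m hm
      rcases lt_trichotomy m j with h | h | h
      · exact absurd (hbef m h) (hm ▸ unb_ne_ded)
      · exfalso; rw [h] at hm; rw [hm] at hact; exact not_active_unb hact
      · exact h
    have hC : ∀ m : Fin L, IsActive (s m) → m = j := by
      intro m hm
      rcases lt_trichotomy m j with h | h | h
      · exfalso; rw [hbef m h] at hm; exact not_active_ded hm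
      · exact h
      · exfalso; rw [haft m h] at hm; exact not_active_unb hm
    refine ⟨?_, ?_, ?_, ?_, ?_, ?_⟩
    · intro hcon
      have := hB _ hcon
      exact absurd this (by simp [Fin.lt_def])
    · intro hcon
      have := hA _ hcon
      have hjL : (j : ℕ) < L := j.isLt
      simp [Fin.lt_def] at this
      omega
    · rintro p q hpq ⟨hp, hq⟩
      have := (hC p hp).trans (hC q hq).symm
      exact absurd this hpq.ne
    · rintro p q hpq ⟨hp, hq⟩
      have hq' := hA q hq
      rcases hp with hp | hp
      · have := hC p hp; rw [this] at hpq; exact absurd hq' (asymm hpq)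
      · have := hB p hp
        exact absurd (this.trans (hpq.trans hq')) (lt_irrefl j)
    · rintro p q hpq ⟨hp, hq⟩
      have hp' := hB p hp
      rcases hq with hq | hq
      · have := hC q hq; rw [this] at hpq; exact absurd (hp'.trans hpq) (lt_irrefl j)
      · have := hA q hq
        exact absurd (hp'.trans (hpq.trans this)) (lt_irrefl j)
    · rintro p h ⟨hp, hq⟩
      have h1 := hA p hp
      have h2 := hB _ hq
      have h1' : (p : ℕ) < (j : ℕ) := h1
      have h2' : (j : ℕ) < (p : ℕ) + 1 := h2
      omega

/-- The legal clock states are exactly the strings d,...,d,a,u,...,u with one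
active particle (a ∈ {a1, a2}), dead particles before it and unborn particles
after it; consequently there are exactly 2L of them. -/
theorem stmt_14 (L : ℕ) (hL : 0 < L) :
    (∀ s : Fin L → Fin 4, LegalClock L hL s ↔ IsDominoString L s) ∧
    Nat.card {s : Fin L → Fin 4 // LegalClock L hL s} = 2 * L := by
  refine ⟨legal_iff L hL, ?_⟩
  classical
  let f : Fin L × Bool → {s : Fin L → Fin 4 // LegalClock L hL s} :=
    fun p => ⟨dominoFun L p.1 (if p.2 then act1 else act2),
      (legal_iff L hL _).mpr (dominoFun_domino L p.1 _
        (by rcases p.2 with _ | _ <;> simp [active_act1, active_act2]))⟩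
  have hbij : Function.Bijective f := by
    constructor
    · rintro ⟨j, b⟩ ⟨j', b'⟩ hfe
      have heq : dominoFun L j (if b then act1 else act2)
          = dominoFun L j' (if b' then act1 else act2) := congrArg Subtype.val hfe
      have hjj : j = j' := by
        by_contra hne
        have := congrFun heq j
        rcases lt_trichotomy j j' with h | h | h
        · have h2 : ¬ j < j := lt_irrefl j
          have h3 : (j : Fin L) ≠ j' := hne
          simp [dominoFun, h, h2] at this
          rcases b with _ | _ <;> simp_all [act1, act2, ded]
        · exact hne h
        · have h2 : ¬ j < j := lt_irrefl j
          have h4 : ¬ j < j' := not_lt.mpr h.le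
          simp [dominoFun, h2, h4, hne] at this
          rcases b with _ | _ <;> simp_all [act1, act2, unb]
      subst hjj
      have := congrFun heq j
      have hself : ∀ a : Fin 4, dominoFun L j a j = a := by
        intro a; simp [dominoFun]
      rw [hself, hself] at this
      have hbb : b = b' := by
        rcases b with _ | _ <;> rcases b' with _ | _ <;> simp_all [act1, act2]
      exact Prod.ext rfl hbb
    · rintro ⟨s, hs⟩
      obtain ⟨j, hact, hbef, haft⟩ := (legal_iff L hL s).mp hs
      rcases hact with ha | ha
      · refine ⟨⟨j, true⟩, ?_⟩
        apply Subtype.ext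
        funext k
        rcases lt_trichotomy k j with h | h | h
        · simp [f, dominoFun, h, hbef k h]
        · subst h; simp [f, dominoFun, ha]
        · have h1 : ¬ k < j := not_lt.mpr h.le
          have h2 : k ≠ j := h.ne'
          simp [f, dominoFun, h1, h2, haft k h]
      · refine ⟨⟨j, false⟩, ?_⟩
        apply Subtype.ext
        funext k
        rcases lt_trichotomy k j with h | h | h
        · simp [f, dominoFun, h, hbef k h]
        · subst h; simp [f, dominoFun, ha]
        · have h1 : ¬ k < j := not_lt.mpr h.le
          have h2 : k ≠ j := h.ne'
          simp [f, dominoFun, h1, h2, haft k h]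
  have := Nat.card_eq_of_bijective f hbij
  rw [← this]
  simp [Nat.card_eq_fintype_card, Nat.mul_comm]
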